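/- Under the derivation action Lₙ = −Σᵢ xᵢ^{n+1} ∂/∂xᵢ on symmetric functions, for n ≥ 1 and m ≥ 0 the action on complete homogeneous symmetric functions is Lₙ(hₘ) = −(n+m)·h_{n+m} + Σ_{j=0}^{n−1} p_{n−j}·h_{m+j}. -/

import Mathlib

open MvPolynomial Finset

set_option linter.unusedSectionVars false

variable {σ : Type*} [Fintype σ] [DecidableEq σ]

private lemma multiset_prod_map_X (s : Multiset σ) :
    (s.map (X : σ → MvPolynomial σ ℚ)).prod = monomial s.toFinsupp 1 := by
  induction s using Multiset.induction with
  | empty => simp [monomial_zero']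
  | cons a s ih =>
      rw [Multiset.map_cons, Multiset.prod_cons, ih, X, monomial_mul, one_mul,
        ← Multiset.toFinsupp_singleton, ← Multiset.toFinsupp_add,
        Multiset.singleton_add]

private lemma hsymm_eq_sum (m : ℕ) :
    hsymm σ ℚ m = ∑ s : Sym σ m, monomial (s.1.toFinsupp) (1 : ℚ) := by
  simp [hsymm, multiset_prod_map_X]

private lemma hX_mul (i : σ) (d : σ →₀ ℕ) :
    X i * monomial (d - Finsupp.single i 1) ((d i : ℚ)) = monomial d ((d i : ℚ)) := by
  rcases Nat.eq_zero_or_pos (d i) with h | h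
  · simp [h]
  · rw [X, monomial_mul, one_mul, add_tsub_cancel_of_le]
    rwa [Finsupp.single_le_iff]

private lemma fval (i : σ) (u : Multiset σ) :
    monomial ((i ::ₘ u).toFinsupp - Finsupp.single i 1) (((i ::ₘ u).toFinsupp i : ℚ))
      = monomial u.toFinsupp 1
        + X i * monomial (u.toFinsupp - Finsupp.single i 1) ((u.toFinsupp i : ℚ)) := by
  rw [hX_mul]
  have h2 : (i ::ₘ u).toFinsupp = Finsupp.single i 1 + u.toFinsupp := by
    rw [← Multiset.singleton_add, Multiset.toFinsupp_add, Multiset.toFinsupp_singleton]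
  rw [h2, add_tsub_cancel_left]
  simp only [Finsupp.coe_add, Pi.add_apply, Finsupp.single_eq_same]
  push_cast
  exact map_add (monomial (Multiset.toFinsupp u)) 1 _

private lemma pderiv_hsymm_succ (i : σ) (m : ℕ) :
    pderiv i (hsymm σ ℚ (m + 1)) = hsymm σ ℚ m + X i * pderiv i (hsymm σ ℚ m) := by
  rw [hsymm_eq_sum, hsymm_eq_sum, map_sum, map_sum, Finset.mul_sum, ← Finset.sum_add_distrib]
  simp only [pderiv_monomial, one_mul]
  have hzero : ∀ t : Sym σ (m + 1), t ∈ (univ : Finset (Sym σ (m + 1))) →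
      monomial (t.1.toFinsupp - Finsupp.single i 1) ((t.1.toFinsupp i : ℚ)) ≠ 0 →
      i ∈ t := by
    intro t _ h
    by_contra hi
    apply h
    have hc : t.1.toFinsupp i = 0 := by
      rw [Multiset.toFinsupp_apply, Multiset.count_eq_zero]
      exact hi
    rw [hc]
    simp
  rw [← Finset.sum_filter_of_ne hzero]
  refine Finset.sum_bij' (fun t ht => t.erase i (by simpa using (Finset.mem_filter.mp ht).2))
    (fun s _ => i ::ₛ s) (fun t ht => Finset.mem_univ _) ?_ ?_ ?_ ?_
  · intro s hs
    simp only [Finset.mem_filter, Finset.mem_univ, true_and]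
    exact Sym.mem_cons_self i s
  · intro t ht
    exact Sym.cons_erase _
  · intro s hs
    apply Sym.erase_cons_head
  · intro t ht
    have hit : i ∈ t := by simpa using (Finset.mem_filter.mp ht).2
    have hu : t.1 = i ::ₘ (t.erase i hit).1 := by
      have := Sym.cons_erase hit
      exact congrArg Subtype.val this.symm
    conv_lhs => rw [hu]
    exact fval i _

private lemma pderiv_hsymm (i : σ) (m : ℕ) :
    pderiv i (hsymm σ ℚ m) = ∑ k ∈ range m, X i ^ k * hsymm σ ℚ (m - 1 - k) := by
  induction m with
  | zero => simp
  | succ m ih =>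
      rw [pderiv_hsymm_succ, ih, Finset.mul_sum, Finset.sum_range_succ']
      simp only [pow_zero, one_mul, Nat.sub_zero, Nat.add_sub_cancel]
      rw [add_comm]
      congr 1
      refine Finset.sum_congr rfl fun k hk => ?_
      rw [← mul_assoc, ← pow_succ']
      congr 2
      omega

private lemma sum_pow_pderiv (a m : ℕ) :
    ∑ i : σ, X i ^ a * pderiv i (hsymm σ ℚ m)
      = ∑ k ∈ range m, psum σ ℚ (a + k) * hsymm σ ℚ (m - 1 - k) := by
  simp only [pderiv_hsymm, Finset.mul_sum]
  rw [Finset.sum_comm]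
  refine Finset.sum_congr rfl fun k hk => ?_
  rw [psum, Finset.sum_mul]
  refine Finset.sum_congr rfl fun i hi => ?_
  rw [← mul_assoc, ← pow_add]

private lemma euler_hsymm (m : ℕ) :
    ∑ i : σ, X i * pderiv i (hsymm σ ℚ m) = (m : ℚ) • hsymm σ ℚ m := by
  rw [hsymm_eq_sum]
  simp only [map_sum, pderiv_monomial, one_mul, Finset.mul_sum, Finset.smul_sum]
  rw [Finset.sum_comm]
  refine Finset.sum_congr rfl fun s hs => ?_
  simp only [hX_mul]
  rw [← map_sum (monomial s.1.toFinsupp)]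
  have hcard : ∑ i : σ, s.1.toFinsupp i = m := by
    simp only [Multiset.toFinsupp_apply]
    have huniv : ∀ u : Multiset σ, ∑ x : σ, Multiset.count x u = Multiset.card u := by
      intro u
      rw [← Multiset.toFinset_sum_count_eq]
      symm
      apply Finset.sum_subset (Finset.subset_univ _)
      intro x _ hx
      rw [Multiset.count_eq_zero]
      simpa using hx
    rw [huniv]
    exact s.2
  rw [← Nat.cast_sum, hcard, smul_monomial, smul_eq_mul, mul_one]

private lemma newton_hsymm (M : ℕ) :
    (M : ℚ) • hsymm σ ℚ M = ∑ k ∈ range M, psum σ ℚ (k + 1) * hsymm σ ℚ (M - 1 - k) := by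
  rw [← euler_hsymm]
  have := sum_pow_pderiv (σ := σ) 1 M
  simp only [pow_one] at this
  rw [this]
  exact Finset.sum_congr rfl fun k hk => by rw [add_comm]

/-- Under Lₙ = -∑ᵢ xᵢ^{n+1} ∂/∂xᵢ, for n ≥ 1:
Lₙ(hₘ) = -(n+m)·h_{n+m} + ∑_{j=0}^{n-1} p_{n-j}·h_{m+j}. -/
theorem wittOp_hsymm (N : ℕ) (n : ℕ) (hn : 1 ≤ n) (m : ℕ) :
    (- ∑ i : Fin N, X i ^ (n + 1) * pderiv i (hsymm (Fin N) ℚ m))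
      = -(((n + m : ℕ) : ℚ)) • hsymm (Fin N) ℚ (n + m)
        + ∑ j ∈ range n, psum (Fin N) ℚ (n - j) * hsymm (Fin N) ℚ (m + j) := by
  rw [sum_pow_pderiv, neg_smul, newton_hsymm]
  have hsplit : ∑ k ∈ range (n + m), psum (Fin N) ℚ (k+1) * hsymm (Fin N) ℚ (n+m-1-k)
      = (∑ k ∈ range n, psum (Fin N) ℚ (k+1) * hsymm (Fin N) ℚ (n+m-1-k))
        + ∑ k ∈ range m, psum (Fin N) ℚ ((n+k)+1) * hsymm (Fin N) ℚ (n+m-1-(n+k)) := by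
    rw [Finset.range_eq_Ico, ← Finset.sum_Ico_consecutive _ (Nat.zero_le n) (Nat.le_add_right n m)]
    congr 1
    · rw [Finset.range_eq_Ico]
    rw [Finset.sum_Ico_eq_sum_range]
    simp only [Nat.add_sub_cancel_left]
  have hrefl : ∑ j ∈ range n, psum (Fin N) ℚ (n - j) * hsymm (Fin N) ℚ (m + j)
      = ∑ k ∈ range n, psum (Fin N) ℚ (k+1) * hsymm (Fin N) ℚ (n+m-1-k) := by
    rw [← Finset.sum_range_reflect]
    refine Finset.sum_congr rfl fun j hj => ?_
    simp only [Finset.mem_range] at hj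
    rw [show n - (n-1-j) = j+1 from by omega, show m + (n-1-j) = n+m-1-j from by omega]
  have hsec : ∑ k ∈ range m, psum (Fin N) ℚ ((n+k)+1) * hsymm (Fin N) ℚ (n+m-1-(n+k))
      = ∑ k ∈ range m, psum (Fin N) ℚ (n+1+k) * hsymm (Fin N) ℚ (m-1-k) := by
    refine Finset.sum_congr rfl fun k hk => ?_
    rw [show (n+k)+1 = n+1+k from by omega, show n+m-1-(n+k) = m-1-k from by omega]
  rw [hsplit, hsec, hrefl]
  ring
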